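/- The pair (λ, μ) is a Lagrange multiplier for the minimization of H₁ over Z⁰_lin: μ ≥ 0 and inf over all ζ ∈ ℝ⁴ of the Lagrangian L₁(ζ) = H₁(ζ) + λ·c^⊤(ζ − ζ⁰(Σ)) − μ·ζ₄ equals −(ψ/2)·v^⊤ζ̃, the minimal value of H₁ over Z⁰_lin. -/

import Mathlib

open Finset

noncomputable section

namespace Stmt9

/-- The Euclidean norm of a vector in `ℝ^m`. -/
def enorm {m : ℕ} (z : Fin m → ℝ) : ℝ := Real.sqrt (∑ i, z i ^ 2)

/-- The reference control `ζ⁰(Σ) = (0, Σ, 0, 0)`. -/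
def zeta0 (Sig : ℝ) : Fin 4 → ℝ := ![0, Sig, 0, 0]

/-- The fourth standard basis vector `e₄` of `ℝ⁴`. -/
def e4 : Fin 4 → ℝ := fun i => if i = 3 then 1 else 0

/-- `c^⊤ Ψ v` for the diagonal matrix `Ψ = diag psi`. -/
def cPv (psi c v : Fin 4 → ℝ) : ℝ := ∑ i, c i * psi i * v i

/-- `c^⊤ Ψ c` for the diagonal matrix `Ψ = diag psi`. -/
def cPc (psi c : Fin 4 → ℝ) : ℝ := ∑ i, c i * psi i * c i

/-- The Lagrange multiplier `λ`. -/
def lam (psi c v : Fin 4 → ℝ) : ℝ :=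
  if 0 ≤ v 3 - cPv psi c v / cPc psi c * c 3 then cPv psi c v / cPc psi c
  else (cPv psi c v - c 3 * v 3 * psi 3) / (cPc psi c - c 3 ^ 2 * psi 3)

/-- The Lagrange multiplier `μ = max (-(v₄ - λ c₄)) 0`. -/
def mu (psi c v : Fin 4 → ℝ) : ℝ := max (-(v 3 - lam psi c v * c 3)) 0

/-- `ζ̃ = Ψ (v - λ c + μ e₄)`. -/
def zetaTilde (psi c v : Fin 4 → ℝ) : Fin 4 → ℝ := fun i =>
  psi i * (v i - lam psi c v * c i + mu psi c v * e4 i)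

/-- `H₁(ζ) = (1/(2ψ)) (ζ - ζ⁰(Σ))^⊤ Ψ⁻¹ (ζ - ζ⁰(Σ)) - v^⊤ (ζ - ζ⁰(Σ))`. -/
def H1 (Sig ψ : ℝ) (psi v : Fin 4 → ℝ) (z : Fin 4 → ℝ) : ℝ :=
  (1 / (2 * ψ)) * ∑ i, (z i - zeta0 Sig i) ^ 2 / psi i -
    ∑ i, v i * (z i - zeta0 Sig i)

lemma e4_0 : e4 0 = 0 := rfl
lemma e4_1 : e4 1 = 0 := rfl
lemma e4_2 : e4 2 = 0 := rfl
lemma e4_3 : e4 3 = 1 := rfl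

lemma cPc_pos (psi c : Fin 4 → ℝ) (hpsi : ∀ i, 0 < psi i) (hc : c 0 ≠ 0) :
    0 < cPc psi c := by
  simp only [cPc, Fin.sum_univ_four]
  nlinarith [mul_pos (hpsi 0) (mul_self_pos.mpr hc),
    mul_nonneg (hpsi 1).le (mul_self_nonneg (c 1)),
    mul_nonneg (hpsi 2).le (mul_self_nonneg (c 2)),
    mul_nonneg (hpsi 3).le (mul_self_nonneg (c 3))]

lemma cPc3_pos (psi c : Fin 4 → ℝ) (hpsi : ∀ i, 0 < psi i) (hc : c 0 ≠ 0) :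
    0 < cPc psi c - c 3 ^ 2 * psi 3 := by
  simp only [cPc, Fin.sum_univ_four]
  nlinarith [mul_pos (hpsi 0) (mul_self_pos.mpr hc),
    mul_nonneg (hpsi 1).le (mul_self_nonneg (c 1)),
    mul_nonneg (hpsi 2).le (mul_self_nonneg (c 2))]

lemma compl (psi c v : Fin 4 → ℝ) :
    mu psi c v * (v 3 - lam psi c v * c 3 + mu psi c v) = 0 := by
  rcases le_or_gt 0 (v 3 - lam psi c v * c 3) with h | h
  · have hmu : mu psi c v = 0 := max_eq_right (by linarith)
    simp [hmu]
  · have hmu : mu psi c v = -(v 3 - lam psi c v * c 3) := max_eq_left (by linarith)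
    rw [hmu]; ring

lemma w3_nonneg (psi c v : Fin 4 → ℝ) :
    0 ≤ v 3 - lam psi c v * c 3 + mu psi c v := by
  rcases le_or_gt 0 (v 3 - lam psi c v * c 3) with h | h
  · have hmu : mu psi c v = 0 := max_eq_right (by linarith)
    rw [hmu]; linarith
  · have hmu : mu psi c v = -(v 3 - lam psi c v * c 3) := max_eq_left (by linarith)
    rw [hmu]; linarith

lemma orth (psi c v : Fin 4 → ℝ) (hpsi : ∀ i, 0 < psi i) (hc : c 0 ≠ 0) :
    cPv psi c v - lam psi c v * cPc psi c + mu psi c v * (c 3 * psi 3) = 0 := by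
  have hA := cPc_pos psi c hpsi hc
  have hA' := cPc3_pos psi c hpsi hc
  by_cases h : 0 ≤ v 3 - cPv psi c v / cPc psi c * c 3
  · have hl : lam psi c v = cPv psi c v / cPc psi c := by rw [lam, if_pos h]
    have hmu : mu psi c v = 0 := by
      rw [mu, hl]; exact max_eq_right (by linarith)
    rw [hl, hmu]
    field_simp
    ring
  · have hl : lam psi c v =
        (cPv psi c v - c 3 * v 3 * psi 3) / (cPc psi c - c 3 ^ 2 * psi 3) := by
      rw [lam, if_neg h]
    have h1 : v 3 * cPc psi c < cPv psi c v * c 3 := by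
      rw [not_le, sub_neg, div_mul_eq_mul_div, lt_div_iff₀ hA] at h
      linarith
    have h2 : v 3 - lam psi c v * c 3 ≤ 0 := by
      rw [hl, div_mul_eq_mul_div, sub_nonpos, le_div_iff₀ hA']
      nlinarith [h1]
    have hmu : mu psi c v = -(v 3 - lam psi c v * c 3) := max_eq_left (by linarith)
    rw [hmu, hl]
    field_simp
    ring

lemma key (psi c v : Fin 4 → ℝ) (hpsi : ∀ i, 0 < psi i) (hc : c 0 ≠ 0) :
    ∑ i, psi i * (v i - lam psi c v * c i + mu psi c v * e4 i) ^ 2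
      = ∑ i, v i * zetaTilde psi c v i := by
  have horth := orth psi c v hpsi hc
  have hcompl := compl psi c v
  simp only [cPv, cPc, Fin.sum_univ_four] at horth
  simp only [zetaTilde, Fin.sum_univ_four, e4_0, e4_1, e4_2, e4_3]
  ring_nf
  linear_combination (-(lam psi c v)) * horth + psi 3 * hcompl

lemma quad (ψ p w d : ℝ) (hψ : 0 < ψ) (hp : 0 < p) :
    -(ψ * p / 2) * w ^ 2 ≤ 1 / (2 * ψ) * (d ^ 2 / p) - w * d := by
  have h1 : 1 / (2 * ψ) * (d ^ 2 / p) - w * d - (-(ψ * p / 2) * w ^ 2)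
      = (d - ψ * p * w) ^ 2 / (2 * ψ * p) := by
    field_simp
    ring
  have h2 := div_nonneg (sq_nonneg (d - ψ * p * w)) (by positivity : (0:ℝ) ≤ 2 * ψ * p)
  linarith

lemma lagr_lower (Sig ψ : ℝ) (psi c v : Fin 4 → ℝ) (hpsi : ∀ i, 0 < psi i)
    (hc : c 0 ≠ 0) (hψ : 0 < ψ) (z : Fin 4 → ℝ) :
    -(ψ / 2) * ∑ i, v i * zetaTilde psi c v i ≤
      H1 Sig ψ psi v z + lam psi c v * (∑ i, c i * (z i - zeta0 Sig i)) -
        mu psi c v * z 3 := by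
  have hkey := key psi c v hpsi hc
  simp only [Fin.sum_univ_four, zetaTilde, e4_0, e4_1, e4_2, e4_3] at hkey
  have q0 := quad ψ (psi 0) (v 0 - lam psi c v * c 0) (z 0 - zeta0 Sig 0) hψ (hpsi 0)
  have q1 := quad ψ (psi 1) (v 1 - lam psi c v * c 1) (z 1 - zeta0 Sig 1) hψ (hpsi 1)
  have q2 := quad ψ (psi 2) (v 2 - lam psi c v * c 2) (z 2 - zeta0 Sig 2) hψ (hpsi 2)
  have q3 := quad ψ (psi 3) (v 3 - lam psi c v * c 3 + mu psi c v)
    (z 3 - zeta0 Sig 3) hψ (hpsi 3)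
  have h30 : zeta0 Sig 3 = 0 := rfl
  simp only [H1, Fin.sum_univ_four, zetaTilde, e4_0, e4_1, e4_2, e4_3]
  rw [h30] at q3 ⊢
  rw [← hkey]
  linarith [q0, q1, q2, q3]

/-- `(λ, μ)` is a Lagrange multiplier for the minimization of `H₁` over `Z⁰_lin`:
`μ ≥ 0` and the infimum over all `ζ ∈ ℝ⁴` of the Lagrangian
`L₁(ζ) = H₁(ζ) + λ c^⊤(ζ - ζ⁰(Σ)) - μ ζ₄` equals `-(ψ/2) v^⊤ ζ̃`, which is the
minimal value of `H₁` over `Z⁰_lin`. -/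
theorem lagrange_multiplier_for_H1
    (Sig : ℝ) (hSig : 0 < Sig) (psi c v : Fin 4 → ℝ)
    (hpsi : ∀ i, 0 < psi i) (hc : c 0 ≠ 0)
    (ψ : ℝ) (hψ : 0 < ψ) :
    0 ≤ mu psi c v ∧
    sInf (Set.range fun z : Fin 4 → ℝ =>
        H1 Sig ψ psi v z + lam psi c v * (∑ i, c i * (z i - zeta0 Sig i)) -
          mu psi c v * z 3) =
      -(ψ / 2) * ∑ i, v i * zetaTilde psi c v i ∧
    IsLeast (H1 Sig ψ psi v '' {z | (∑ i, c i * (z i - zeta0 Sig i) = 0) ∧ 0 ≤ z 3})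
      (-(ψ / 2) * ∑ i, v i * zetaTilde psi c v i) := by
  have hkey := key psi c v hpsi hc
  have horth := orth psi c v hpsi hc
  have hcompl := compl psi c v
  have hw3 := w3_nonneg psi c v
  set zs : Fin 4 → ℝ := fun i => zeta0 Sig i + ψ * zetaTilde psi c v i with hzs
  have hzt3 : zetaTilde psi c v 3 = psi 3 * (v 3 - lam psi c v * c 3 + mu psi c v) := by
    simp [zetaTilde, e4_3]
  have hzs3 : zs 3 = ψ * zetaTilde psi c v 3 := by
    simp [hzs, zeta0]
  have hzs3' : 0 ≤ zs 3 := by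
    rw [hzs3, hzt3]
    exact mul_nonneg hψ.le (mul_nonneg (hpsi 3).le hw3)
  have hconstraint : ∑ i, c i * (zs i - zeta0 Sig i) = 0 := by
    simp only [cPv, cPc, Fin.sum_univ_four] at horth
    simp only [hzs, Fin.sum_univ_four, zetaTilde, e4_0, e4_1, e4_2, e4_3]
    ring_nf
    linear_combination ψ * horth
  have hH1 : H1 Sig ψ psi v zs = -(ψ / 2) * ∑ i, v i * zetaTilde psi c v i := by
    have hne : ∀ i, psi i ≠ 0 := fun i => (hpsi i).ne'
    have hd : ∀ i, zs i - zeta0 Sig i = ψ * zetaTilde psi c v i := fun i => by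
      simp [hzs]
    have hq : ∀ i, (ψ * zetaTilde psi c v i) ^ 2 / psi i
        = ψ ^ 2 * (psi i * (v i - lam psi c v * c i + mu psi c v * e4 i) ^ 2) := by
      intro i
      simp only [zetaTilde]
      rw [div_eq_iff (hne i)]
      ring
    simp only [Fin.sum_univ_four] at hkey ⊢
    simp only [H1, Fin.sum_univ_four]
    rw [hd 0, hd 1, hd 2, hd 3, hq 0, hq 1, hq 2, hq 3]
    field_simp
    linear_combination hkey
  have hmuz : mu psi c v * zs 3 = 0 := by
    rw [hzs3, hzt3]
    linear_combination ψ * psi 3 * hcompl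
  have hlow := lagr_lower Sig ψ psi c v hpsi hc hψ
  refine ⟨le_max_right _ _, ?_, ?_⟩
  · have hls : IsLeast (Set.range fun z : Fin 4 → ℝ =>
        H1 Sig ψ psi v z + lam psi c v * (∑ i, c i * (z i - zeta0 Sig i)) -
          mu psi c v * z 3) (-(ψ / 2) * ∑ i, v i * zetaTilde psi c v i) := by
      constructor
      · refine ⟨zs, ?_⟩
        beta_reduce
        rw [hH1, hconstraint, hmuz]
        ring
      · rintro y ⟨z, rfl⟩
        exact hlow z
    exact hls.csInf_eq
  · constructor
    · exact ⟨zs, ⟨hconstraint, hzs3'⟩, hH1⟩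
    · rintro y ⟨z, ⟨h1, h2⟩, rfl⟩
      have h3 := hlow z
      rw [h1] at h3
      have h4 : 0 ≤ mu psi c v * z 3 := mul_nonneg (le_max_right _ _) h2
      simp only [mul_zero, add_zero] at h3
      linarith


end Stmt9
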